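/- arXiv:2010.05214 — 6 statements merged into one kernel-verified Lean document; each statement's English description precedes it below -/
import Mathlib

section
/- Let N' and h be positive integers, let A be a linear endomorphism of ℝ^{N'}, let B : ℝ^h → ℝ^{N'} be a linear map, and let D be a linear endomorphism of ℝ^h satisfying D^s = id for some integer s ≥ 1. Let λ > 1 be a real number and let u₊ ∈ ℝ^{N'} satisfy ‖u₊‖ = 1 and A u₊ = λ·u₊. Assume that for every u ∈ ℝ^{N'} there is a real number a(u) such that λ^{−n}·A^n(u) → a(u)·u₊ as n → ∞. Define E : ℝ^{N'} × ℝ^h → ℝ^{N'} × ℝ^h by E(u,v) = (A u + B v, D v). Then for every (u,v) ∈ ℝ^{N'} × ℝ^h the series Σ_{k=0}^∞ λ^{−(k+1)}·a(B(D^k v)) converges, and λ^{−n}·E^n(u,v) converges to c·(u₊, 0), where c := a(u) + Σ_{k=0}^∞ λ^{−(k+1)}·a(B(D^k v)). Moreover, if c > 0 then the normalized iterates ‖E^n(u,v)‖^{−1}·E^n(u,v) converge to (u₊, 0). -/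
open Filter Topology

/-- Lemma 7.2 of the paper: block upper-triangular dynamics with finite-order
bottom block and Perron-like top block. -/
theorem stmt_0 (N' h : ℕ) (hN' : 0 < N') (hh : 0 < h)
    (A : EuclideanSpace ℝ (Fin N') →ₗ[ℝ] EuclideanSpace ℝ (Fin N'))
    (B : EuclideanSpace ℝ (Fin h) →ₗ[ℝ] EuclideanSpace ℝ (Fin N'))
    (D : EuclideanSpace ℝ (Fin h) →ₗ[ℝ] EuclideanSpace ℝ (Fin h))
    (s : ℕ) (hs : 1 ≤ s) (hD : D ^ s = LinearMap.id)
    (lam : ℝ) (hlam : 1 < lam)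
    (uplus : EuclideanSpace ℝ (Fin N')) (hnorm : ‖uplus‖ = 1)
    (hAu : A uplus = lam • uplus)
    (a : EuclideanSpace ℝ (Fin N') → ℝ)
    (ha : ∀ u, Tendsto (fun n : ℕ => (lam⁻¹) ^ n • (A ^ n) u) atTop (𝓝 (a u • uplus)))
    (E : EuclideanSpace ℝ (Fin N') × EuclideanSpace ℝ (Fin h) →
         EuclideanSpace ℝ (Fin N') × EuclideanSpace ℝ (Fin h))
    (hE : ∀ p, E p = (A p.1 + B p.2, D p.2))
    (u : EuclideanSpace ℝ (Fin N')) (v : EuclideanSpace ℝ (Fin h)) :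
    Summable (fun k : ℕ => (lam⁻¹) ^ (k + 1) * a (B ((D ^ k) v))) ∧
    Tendsto (fun n : ℕ => (lam⁻¹) ^ n • E^[n] (u, v)) atTop
      (𝓝 ((a u + ∑' k : ℕ, (lam⁻¹) ^ (k + 1) * a (B ((D ^ k) v))) • (uplus, 0))) ∧
    (0 < a u + ∑' k : ℕ, (lam⁻¹) ^ (k + 1) * a (B ((D ^ k) v)) →
      Tendsto (fun n : ℕ => ‖E^[n] (u, v)‖⁻¹ • E^[n] (u, v)) atTop (𝓝 (uplus, 0))) := by
  have hlam0 : (0:ℝ) < lam := lt_trans one_pos hlam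
  have hinv0 : (0:ℝ) < lam⁻¹ := inv_pos.mpr hlam0
  have hinv1 : lam⁻¹ < 1 := inv_lt_one_of_one_lt₀ hlam
  -- D has period s
  have hDk : ∀ k : ℕ, (D ^ k) v = (D ^ (k % s)) v := by
    intro k
    have : D ^ k = D ^ (k % s) := by
      conv_lhs => rw [← Nat.mod_add_div k s]
      rw [pow_add, pow_mul, hD]
      simp [← Module.End.one_eq_id]
    rw [this]
  -- uniform bound
  have hb : ∀ r : ℕ, ∃ C : ℝ, ∀ m : ℕ,
      ‖(lam⁻¹) ^ m • (A ^ m) (B ((D ^ r) v))‖ ≤ C := by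
    intro r
    obtain ⟨C, hC⟩ := ((ha (B ((D ^ r) v))).norm).bddAbove_range
    exact ⟨C, fun m => hC ⟨m, rfl⟩⟩
  choose g hg using hb
  have hsne : (Finset.range s).Nonempty := ⟨0, by simpa using Nat.succ_le_iff.mp hs⟩
  set C : ℝ := max 0 ((Finset.range s).sup' hsne g) with hCdef
  have hC0 : 0 ≤ C := le_max_left _ _
  have hC : ∀ k m : ℕ, ‖(lam⁻¹) ^ m • (A ^ m) (B ((D ^ k) v))‖ ≤ C := by
    intro k m
    rw [hDk k]
    refine le_trans (hg (k % s) m) (le_trans ?_ (le_max_right _ _))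
    exact Finset.le_sup' g (Finset.mem_range.mpr (Nat.mod_lt _ (lt_of_lt_of_le one_pos hs)))
  have haC : ∀ k : ℕ, |a (B ((D ^ k) v))| ≤ C := by
    intro k
    have h1 : ‖a (B ((D ^ k) v)) • uplus‖ ≤ C :=
      le_of_tendsto ((ha (B ((D ^ k) v))).norm) (Eventually.of_forall (hC k))
    rwa [norm_smul, hnorm, mul_one, Real.norm_eq_abs] at h1
  -- summability
  have hsum : Summable (fun k : ℕ => (lam⁻¹) ^ (k + 1) * a (B ((D ^ k) v))) := by
    refine Summable.of_norm_bounded (g := fun k => (lam⁻¹) ^ k * (lam⁻¹ * C))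
      ((summable_geometric_of_lt_one hinv0.le hinv1).mul_right _) ?_
    intro k
    rw [Real.norm_eq_abs, abs_mul, abs_pow, abs_of_pos hinv0, pow_succ, mul_assoc]
    exact mul_le_mul_of_nonneg_left
      (mul_le_mul_of_nonneg_left (haC k) hinv0.le) (pow_nonneg hinv0.le k)
  -- iterate formula
  have hiter : ∀ n : ℕ, E^[n] (u, v) =
      ((A ^ n) u + ∑ k ∈ Finset.range n, (A ^ (n - 1 - k)) (B ((D ^ k) v)), (D ^ n) v) := by
    intro n
    induction n with
    | zero => simp
    | succ n ih =>
        rw [Function.iterate_succ_apply', ih, hE]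
        simp only [map_add, map_sum, Finset.sum_range_succ]
        congr 1
        · have h1 : ∀ k ∈ Finset.range n,
              A ((A ^ (n - 1 - k)) (B ((D ^ k) v))) = (A ^ (n - k)) (B ((D ^ k) v)) := by
            intro k hk
            have hk' : n - 1 - k + 1 = n - k := by
              have := Finset.mem_range.mp hk; omega
            rw [← hk']
            try rw [pow_succ']
            try rfl
          rw [Finset.sum_congr rfl h1]
          have h2 : A ((A ^ n) u) = (A ^ (n + 1)) u := by (try rw [pow_succ']); try rfl
          have h3 : ∀ k ∈ Finset.range n, (A ^ (n - k)) (B ((D ^ k) v))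
              = (A ^ (n + 1 - 1 - k)) (B ((D ^ k) v)) := by
            intro k hk; congr 1 <;> omega
          rw [Finset.sum_congr rfl h3, h2]
          simp only [Nat.add_sub_cancel, Nat.sub_self, pow_zero, Module.End.one_apply]
          abel
        · (try rw [pow_succ']); try rfl
  -- auxiliary family for dominated convergence
  set f : ℕ → ℕ → EuclideanSpace ℝ (Fin N') := fun n k =>
    if k < n then (lam⁻¹) ^ n • (A ^ (n - 1 - k)) (B ((D ^ k) v)) else 0 with hfdef
  have hf_eq : ∀ n k, k < n →
      f n k = (lam⁻¹) ^ (k + 1) • ((lam⁻¹) ^ (n - 1 - k) • (A ^ (n - 1 - k)) (B ((D ^ k) v))) := by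
    intro n k hk
    rw [hfdef]
    simp only [if_pos hk, smul_smul, ← pow_add]
    congr 2
    omega
  have hf_bound : ∀ n k, ‖f n k‖ ≤ C * (lam⁻¹) ^ (k + 1) := by
    intro n k
    by_cases hk : k < n
    · rw [hf_eq n k hk, norm_smul, Real.norm_eq_abs, abs_pow, abs_of_pos hinv0, mul_comm]
      exact mul_le_mul_of_nonneg_right (hC k _) (pow_nonneg hinv0.le _)
    · simp only [hfdef, if_neg hk, norm_zero]
      positivity
  have hf_lim : ∀ k : ℕ, Tendsto (fun n => f n k) atTop
      (𝓝 (((lam⁻¹) ^ (k + 1) * a (B ((D ^ k) v))) • uplus)) := by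
    intro k
    have h1 : Tendsto (fun n : ℕ => n - 1 - k) atTop atTop := by
      have : (fun n : ℕ => n - 1 - k) = fun n => n - (1 + k) := by
        funext n; omega
      rw [this]
      exact tendsto_sub_atTop_nat (1 + k)
    have h2 := ((ha (B ((D ^ k) v))).comp h1).const_smul ((lam⁻¹) ^ (k + 1))
    rw [← smul_smul]
    refine h2.congr' ?_
    filter_upwards [eventually_gt_atTop k] with n hn
    exact (hf_eq n k hn).symm
  have hdom := tendsto_tsum_of_dominated_convergence
    (f := f) (bound := fun k => C * (lam⁻¹) ^ (k + 1))
    (((summable_geometric_of_lt_one hinv0.le hinv1).mul_left (C * lam⁻¹)).congr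
      (by intro k; ring))
    hf_lim (Eventually.of_forall (fun n k => hf_bound n k))
  -- identify the tsum with the finite sum
  have htsum_f : ∀ n : ℕ, (∑' k, f n k) =
      ∑ k ∈ Finset.range n, (lam⁻¹) ^ n • (A ^ (n - 1 - k)) (B ((D ^ k) v)) := by
    intro n
    rw [tsum_eq_sum (s := Finset.range n)]
    · exact Finset.sum_congr rfl (fun k hk => by
        simp [hfdef, Finset.mem_range.mp hk])
    · intro k hk
      simp [hfdef, Nat.not_lt.mpr (Nat.not_lt.mp (fun h' => hk (Finset.mem_range.mpr h')))]
  -- identify limit of tsum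
  have htsum_lim : (∑' k : ℕ, ((lam⁻¹) ^ (k + 1) * a (B ((D ^ k) v))) • uplus)
      = (∑' k : ℕ, (lam⁻¹) ^ (k + 1) * a (B ((D ^ k) v))) • uplus :=
    Summable.tsum_smul_const hsum uplus
  set S : ℝ := ∑' k : ℕ, (lam⁻¹) ^ (k + 1) * a (B ((D ^ k) v)) with hSdef
  -- first component tendsto
  have hfst : Tendsto (fun n : ℕ => (lam⁻¹) ^ n • ((A ^ n) u +
      ∑ k ∈ Finset.range n, (A ^ (n - 1 - k)) (B ((D ^ k) v)))) atTop
      (𝓝 ((a u + S) • uplus)) := by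
    have h1 : Tendsto (fun n : ℕ => (lam⁻¹) ^ n • (A ^ n) u + ∑' k, f n k) atTop
        (𝓝 (a u • uplus + S • uplus)) := by
      refine (ha u).add ?_
      rw [← htsum_lim] at *
      exact hdom
    rw [← add_smul] at h1
    refine h1.congr ?_
    intro n
    rw [htsum_f n, smul_add, Finset.smul_sum]
  -- second component tendsto
  have hsnd : Tendsto (fun n : ℕ => (lam⁻¹) ^ n • (D ^ n) v) atTop
      (𝓝 (0 : EuclideanSpace ℝ (Fin h))) := by
    obtain ⟨M, hM⟩ : ∃ M : ℝ, ∀ k : ℕ, ‖(D ^ k) v‖ ≤ M := by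
      refine ⟨max 0 ((Finset.range s).sup' hsne (fun r => ‖(D ^ r) v‖)), fun k => ?_⟩
      rw [hDk k]
      refine le_trans ?_ (le_max_right _ _)
      exact Finset.le_sup' (fun r => ‖(D ^ r) v‖)
        (Finset.mem_range.mpr (Nat.mod_lt k (lt_of_lt_of_le one_pos hs)))
    have hM0 : 0 ≤ M := le_trans (norm_nonneg _) (hM 0)
    have hbd : ∀ n : ℕ, ‖(lam⁻¹) ^ n • (D ^ n) v‖ ≤ (lam⁻¹) ^ n * M := by
      intro n
      rw [norm_smul, Real.norm_eq_abs, abs_pow, abs_of_pos hinv0]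
      exact mul_le_mul_of_nonneg_left (hM n) (pow_nonneg hinv0.le n)
    have hten : Tendsto (fun n : ℕ => (lam⁻¹) ^ n * M) atTop (𝓝 0) := by
      have := (tendsto_pow_atTop_nhds_zero_of_lt_one hinv0.le hinv1).mul_const M
      simpa using this
    exact squeeze_zero_norm hbd hten
  -- combined tendsto
  have hmain : Tendsto (fun n : ℕ => (lam⁻¹) ^ n • E^[n] (u, v)) atTop
      (𝓝 ((a u + S) • (uplus, 0))) := by
    have hpair := hfst.prodMk_nhds hsnd
    have heq : ((a u + S) • ((uplus, 0) :
        EuclideanSpace ℝ (Fin N') × EuclideanSpace ℝ (Fin h)))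
        = ((a u + S) • uplus, 0) := by
      simp [Prod.smul_def]
    rw [heq]
    refine hpair.congr ?_
    intro n
    rw [hiter n]
    rfl
  refine ⟨hsum, hmain, ?_⟩
  -- positivity case
  intro hc
  set c : ℝ := a u + S with hcdef
  have hLnorm : ‖c • ((uplus, 0) :
      EuclideanSpace ℝ (Fin N') × EuclideanSpace ℝ (Fin h))‖ = c := by
    rw [norm_smul, Real.norm_eq_abs, abs_of_pos hc, Prod.norm_def]
    simp [hnorm]
  have hnorm_t : Tendsto (fun n : ℕ => ‖(lam⁻¹) ^ n • E^[n] (u, v)‖) atTop (𝓝 c) := by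
    have := hmain.norm
    rwa [hLnorm] at this
  have hinv_t : Tendsto (fun n : ℕ => ‖(lam⁻¹) ^ n • E^[n] (u, v)‖⁻¹) atTop (𝓝 c⁻¹) :=
    hnorm_t.inv₀ (ne_of_gt hc)
  have hfinal := hinv_t.smul hmain
  have htarget : c⁻¹ • (c • ((uplus, 0) :
      EuclideanSpace ℝ (Fin N') × EuclideanSpace ℝ (Fin h))) = (uplus, 0) := by
    rw [smul_smul, inv_mul_cancel₀ (ne_of_gt hc), one_smul]
  rw [htarget] at hfinal
  refine hfinal.congr ?_
  intro n
  rw [norm_smul, Real.norm_eq_abs, abs_pow, abs_of_pos hinv0, mul_inv, smul_smul]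
  congr 1
  have hne : (lam⁻¹) ^ n ≠ 0 := ne_of_gt (pow_pos hinv0 n)
  field_simp
end

section
/- Let I be a finite set, B = (b_{ij}) a real I×I matrix and k ∈ I, and set B' := μ_k B. For a vector x ∈ ℝ^I with all entries positive, define the vector T_B(x) by (T_B x)_k = x_k^{−1} and (T_B x)_i = x_i·(1 + x_k^{−sgn(b_{ik})})^{−b_{ik}} for i ≠ k (real powers of positive reals). Then T_B(x) again has all entries positive, and T_{B'}(T_B(x)) = x for every positive x; that is, the cluster X-transformation is involutive. -/
open Matrix

/-- Matrix mutation in direction `k`. -/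
noncomputable def matMut {I : Type*} [DecidableEq I] (B : Matrix I I ℝ) (k : I) :
    Matrix I I ℝ :=
  Matrix.of fun i j =>
    if i = k ∨ j = k then -B i j
    else B i j + max (B i k) 0 * max (B k j) 0 - max (-B i k) 0 * max (-B k j) 0

/-- The cluster X-transformation in direction `k` (on positive real points). -/
noncomputable def Xtrans {I : Type*} [DecidableEq I] (B : Matrix I I ℝ) (k : I)
    (x : I → ℝ) : I → ℝ :=
  fun i => if i = k then (x k)⁻¹
    else x i * (1 + x k ^ (-Real.sign (B i k))) ^ (-(B i k))

/-- The cluster X-transformation preserves positivity and is involutive. -/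
theorem stmt_9 {I : Type*} [Fintype I] [DecidableEq I] (B : Matrix I I ℝ) (k : I) :
    ∀ x : I → ℝ, (∀ i, 0 < x i) →
      (∀ i, 0 < Xtrans B k x i) ∧ Xtrans (matMut B k) k (Xtrans B k x) = x := by
  intro x hx
  have hxk : 0 < x k := hx k
  have hpos : ∀ i, 0 < Xtrans B k x i := by
    intro i
    unfold Xtrans
    split
    · exact inv_pos.mpr hxk
    · exact mul_pos (hx i)
        (Real.rpow_pos_of_pos (add_pos one_pos (Real.rpow_pos_of_pos hxk _)) _)
  refine ⟨hpos, ?_⟩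
  funext i
  by_cases hi : i = k
  · subst hi
    simp [Xtrans]
  · have hBik : matMut B k i k = -B i k := by simp [matMut]
    simp only [Xtrans, hi, if_false, if_pos rfl, hBik, Real.sign_neg, neg_neg, if_true]
    have hinv : (x k)⁻¹ ^ Real.sign (B i k) = x k ^ (-Real.sign (B i k)) := by
      rw [Real.inv_rpow hxk.le, ← Real.rpow_neg hxk.le]
    rw [hinv, mul_assoc, ← Real.rpow_add (add_pos one_pos (Real.rpow_pos_of_pos hxk _)),
      neg_add_cancel, Real.rpow_zero, mul_one]
end

section
/- Let I be a finite set, B = (b_{ij}) a skew-symmetric real I×I matrix and k ∈ I, and set B' := μ_k B. For a vector a ∈ ℝ^I with all entries positive, define the vector S_B(a) by (S_B a)_i = a_i for i ≠ k and (S_B a)_k = a_k^{−1}·( Π_{j∈I} a_j^{[b_{kj}]_+} + Π_{j∈I} a_j^{[−b_{kj}]_+} ) (real powers of positive reals). Then S_B(a) again has all entries positive, and S_{B'}(S_B(a)) = a for every positive a; that is, the cluster A-transformation is involutive. -/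
open Matrix

/-- The cluster A-transformation in direction `k` (on positive real points). -/
noncomputable def Atrans {I : Type*} [Fintype I] [DecidableEq I] (B : Matrix I I ℝ) (k : I)
    (a : I → ℝ) : I → ℝ :=
  fun i => if i = k then
      (a k)⁻¹ * ((∏ j, a j ^ max (B k j) 0) + (∏ j, a j ^ max (-B k j) 0))
    else a i

/-- The cluster A-transformation preserves positivity and is involutive. -/
theorem stmt_10 {I : Type*} [Fintype I] [DecidableEq I] (B : Matrix I I ℝ)
    (hB : Bᵀ = -B) (k : I) :
    ∀ a : I → ℝ, (∀ i, 0 < a i) →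
      (∀ i, 0 < Atrans B k a i) ∧ Atrans (matMut B k) k (Atrans B k a) = a := by
  intro a ha
  have hkk : B k k = 0 := by
    have := congrFun (congrFun hB k) k
    simp [Matrix.transpose_apply] at this
    linarith
  set P := ∏ j, a j ^ max (B k j) 0 with hPdef
  set M := ∏ j, a j ^ max (-B k j) 0 with hMdef
  have hP : 0 < P := Finset.prod_pos fun j _ => Real.rpow_pos_of_pos (ha j) _
  have hM : 0 < M := Finset.prod_pos fun j _ => Real.rpow_pos_of_pos (ha j) _
  have hpos : ∀ i, 0 < Atrans B k a i := by
    intro i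
    unfold Atrans
    split
    · exact mul_pos (inv_pos.2 (ha k)) (add_pos hP hM)
    · exact ha i
  refine ⟨hpos, ?_⟩
  have hne : ∀ j, j ≠ k → Atrans B k a j = a j := by
    intro j hj; simp [Atrans, hj]
  have hAk : Atrans B k a k = (a k)⁻¹ * (P + M) := by unfold Atrans; exact if_pos rfl
  -- products over the transformed vector agree with products over `a`
  have hprod : ∀ c : ℝ → ℝ, c (B k k) = 0 →
      ∏ j, Atrans B k a j ^ c (B k j) = ∏ j, a j ^ c (B k j) := by
    intro c hc
    refine Finset.prod_congr rfl fun j _ => ?_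
    by_cases hj : j = k
    · subst hj; rw [hc, Real.rpow_zero, Real.rpow_zero]
    · rw [hne j hj]
  have hprod1 : ∏ j, Atrans B k a j ^ max (-B k j) 0 = M := by
    rw [hMdef]
    exact hprod (fun x => max (-x) 0) (by simp [hkk])
  have hprod2 : ∏ j, Atrans B k a j ^ max (B k j) 0 = P := by
    rw [hPdef]
    exact hprod (fun x => max x 0) (by simp [hkk])
  funext i
  by_cases hi : i = k
  · subst hi
    have hmut : ∀ j, matMut B i i j = -B i j := by
      intro j; simp [matMut]
    show (if i = i then _ else _) = a i
    rw [if_pos rfl]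
    have e1 : (∏ j, Atrans B i a j ^ max (matMut B i i j) 0) = M := by
      rw [← hprod1]; exact Finset.prod_congr rfl fun j _ => by rw [hmut]
    have e2 : (∏ j, Atrans B i a j ^ max (-matMut B i i j) 0) = P := by
      rw [← hprod2]; exact Finset.prod_congr rfl fun j _ => by rw [hmut, neg_neg]
    rw [e1, e2, hAk, mul_inv, inv_inv, mul_assoc]
    rw [show M + P = P + M from add_comm M P,
      inv_mul_cancel₀ (by positivity), mul_one]
  · show (if i = k then _ else _) = a i
    rw [if_neg hi, hne i hi]
end

section
/- Fix an integer ℓ ≥ 2 and let F, λ_± and L_± be as in the Kronecker setting. Then F(L_+) = λ_+·L_+ and F(L_−) = λ_−·L_−. Moreover these are the only eigenrays of the piecewise-linear map F: if w ∈ ℝ² is nonzero and F(w) = μ·w for some real number μ, then w = t·L_+ or w = t·L_− for some t > 0. -/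
/-- The rays through `L₊` and `L₋` are precisely the eigenrays of the tropicalized
Kronecker mutation loop `F(x₁,x₂) = (ℓ·max(x₁,0) + x₂, −x₁)`, with eigenvalues
`λ₊` and `λ₋`. -/
theorem stmt_15 (ℓ : ℤ) (hℓ : 2 ≤ ℓ) (F : ℝ × ℝ → ℝ × ℝ)
    (hF : ∀ p : ℝ × ℝ, F p = ((ℓ : ℝ) * max p.1 0 + p.2, -p.1))
    (lamp lamm : ℝ)
    (hlamp : lamp = ((ℓ : ℝ) + Real.sqrt ((ℓ : ℝ) ^ 2 - 4)) / 2)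
    (hlamm : lamm = ((ℓ : ℝ) - Real.sqrt ((ℓ : ℝ) ^ 2 - 4)) / 2)
    (Lp Lm : ℝ × ℝ)
    (hLp : Lp = (1, (-(ℓ : ℝ) + Real.sqrt ((ℓ : ℝ) ^ 2 - 4)) / 2))
    (hLm : Lm = (1, (-(ℓ : ℝ) - Real.sqrt ((ℓ : ℝ) ^ 2 - 4)) / 2)) :
    F Lp = lamp • Lp ∧ F Lm = lamm • Lm ∧
    ∀ (w : ℝ × ℝ) (μ : ℝ), w ≠ 0 → F w = μ • w →
      ∃ t : ℝ, 0 < t ∧ (w = t • Lp ∨ w = t • Lm) := by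
  have hℓR : (2:ℝ) ≤ (ℓ:ℝ) := by exact_mod_cast hℓ
  set s := Real.sqrt ((ℓ:ℝ)^2 - 4) with hsdef
  have hnn : (0:ℝ) ≤ (ℓ:ℝ)^2 - 4 := by nlinarith
  have hs2 : s^2 = (ℓ:ℝ)^2 - 4 := Real.sq_sqrt hnn
  have hs0 : 0 ≤ s := Real.sqrt_nonneg _
  subst hlamp hlamm hLp hLm
  refine ⟨?_, ?_, ?_⟩
  · rw [hF]
    simp only [Prod.smul_mk, smul_eq_mul, Prod.mk.injEq]
    constructor
    · rw [max_eq_left (by norm_num : (0:ℝ) ≤ 1)]; ring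
    · nlinarith [hs2]
  · rw [hF]
    simp only [Prod.smul_mk, smul_eq_mul, Prod.mk.injEq]
    constructor
    · rw [max_eq_left (by norm_num : (0:ℝ) ≤ 1)]; ring
    · nlinarith [hs2]
  · intro w μ hw hFw
    rw [hF, Prod.ext_iff] at hFw
    simp only [Prod.smul_mk, smul_eq_mul, Prod.fst, Prod.snd] at hFw
    obtain ⟨h1, h2⟩ := hFw
    simp only [Prod.smul_fst, Prod.smul_snd, smul_eq_mul] at h1 h2
    rcases le_or_gt w.1 0 with hw1 | hw1
    · exfalso
      rw [max_eq_right hw1] at h1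
      have hx : w.1 * (1 + μ^2) = 0 := by linear_combination (-μ)*h1 - h2
      have hz : w.1 = 0 := by
        rcases mul_eq_zero.mp hx with h | h
        · exact h
        · nlinarith [sq_nonneg μ]
      have hz2 : w.2 = 0 := by nlinarith
      exact hw (Prod.ext hz hz2)
    · rw [max_eq_left hw1.le] at h1
      have hμ : μ^2 - (ℓ:ℝ)*μ + 1 = 0 := by
        have hne : w.1 ≠ 0 := ne_of_gt hw1
        have key : (μ^2 - (ℓ:ℝ)*μ + 1) * w.1 = 0 := by linear_combination (-μ)*h1 - h2
        rcases mul_eq_zero.mp key with h | h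
        · linarith [h]
        · exact absurd h hne
      have hcases : (2*μ - (ℓ:ℝ) - s) * (2*μ - (ℓ:ℝ) + s) = 0 := by nlinarith
      refine ⟨w.1, hw1, ?_⟩
      rcases mul_eq_zero.mp hcases with h | h
      · left
        refine Prod.ext ?_ ?_
        · simp [Prod.smul_mk]
        · simp only [Prod.smul_mk, smul_eq_mul, Prod.snd]
          nlinarith
      · right
        refine Prod.ext ?_ ?_
        · simp [Prod.smul_mk]
        · simp only [Prod.smul_mk, smul_eq_mul, Prod.snd]
          nlinarith
end

section
/- Fix an integer ℓ ≥ 2 and let F, C and L_− be as in the Kronecker setting. Then for every w ∈ ℝ² that is not a nonnegative multiple of L_−, there exists n ≥ 0 such that the n-th iterate F^n(w) lies in C. (Since F is linear on C with matrix [[ℓ,1],[−1,0]], this is the sign stability of the Kronecker mutation loop on all of ℝ², with stable sign (+).) -/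
/-- Sign stability of the Kronecker mutation loop: every orbit off the ray `ℝ≥0·L₋`
eventually enters the invariant cone `C = {x₁ ≥ 0, x₁ + x₂ ≥ 0}`. -/
theorem stmt_16 (ℓ : ℤ) (hℓ : 2 ≤ ℓ) (F : ℝ × ℝ → ℝ × ℝ)
    (hF : ∀ p : ℝ × ℝ, F p = ((ℓ : ℝ) * max p.1 0 + p.2, -p.1))
    (Lm : ℝ × ℝ)
    (hLm : Lm = (1, (-(ℓ : ℝ) - Real.sqrt ((ℓ : ℝ) ^ 2 - 4)) / 2)) :
    ∀ w : ℝ × ℝ, (¬ ∃ t : ℝ, 0 ≤ t ∧ w = t • Lm) →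
      ∃ n : ℕ, 0 ≤ (F^[n] w).1 ∧ 0 ≤ (F^[n] w).1 + (F^[n] w).2 := by
  intro w hw
  by_contra hcon
  push_neg at hcon
  have hl2 : (2:ℝ) ≤ (ℓ:ℝ) := by exact_mod_cast hℓ
  set x : ℕ → ℝ := fun n => (F^[n] w).1 with hxdef
  have hstep : ∀ n, F^[n+1] w = F (F^[n] w) := fun n => Function.iterate_succ_apply' F n w
  -- all first coordinates stay nonnegative
  have hx : ∀ n, 0 ≤ x n := by
    intro n
    by_contra hneg
    push_neg at hneg
    set p := F^[n] w with hp
    have hp1 : p.1 < 0 := hneg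
    have hFp : F^[n+1] w = (p.2, -p.1) := by
      rw [hstep, hF]
      rw [max_eq_right (le_of_lt hp1)]
      simp
      exact ⟨rfl, rfl⟩
    rcases le_or_gt 0 p.2 with h2 | h2
    · have h := hcon (n+1) (by rw [hFp]; exact h2)
      rw [hFp] at h
      simp only at h
      linarith
    · have hFFp : F^[n+2] w = (-p.1, -p.2) := by
        have h' : F^[n+2] w = F (F^[n+1] w) := hstep (n+1)
        rw [h', hFp, hF]
        simp only
        rw [max_eq_right (le_of_lt h2)]
        simp
      have h := hcon (n+2) (by rw [hFFp]; simp only; linarith)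
      rw [hFFp] at h
      simp only at h
      linarith
  have hsum : ∀ n, x n + (F^[n] w).2 < 0 := fun n => hcon n (hx n)
  have hy : ∀ n, (F^[n+1] w).2 = -x n := by
    intro n; rw [hstep, hF]
  have hdec : ∀ n, x (n+1) - x n < 0 := by
    intro n
    have h := hsum (n+1)
    rw [hy] at h
    linarith
  have hrec1 : ∀ n, x (n+1) = (ℓ:ℝ) * x n + (F^[n] w).2 := by
    intro n
    have h : F^[n+1] w = ((ℓ:ℝ) * max (x n) 0 + (F^[n] w).2, -(x n)) := by
      rw [hstep, hF]
    rw [max_eq_left (hx n)] at h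
    exact congrArg Prod.fst h
  have hrec : ∀ n, x (n+2) = (ℓ:ℝ) * x (n+1) - x n := by
    intro n
    have h := hrec1 (n+1)
    rw [hy] at h
    linarith
  set s := Real.sqrt ((ℓ:ℝ)^2 - 4) with hs
  have hs0 : 0 ≤ s := Real.sqrt_nonneg _
  have hs2 : s^2 = (ℓ:ℝ)^2 - 4 := Real.sq_sqrt (by nlinarith)
  set lp := ((ℓ:ℝ) + s)/2 with hlp
  set lm := ((ℓ:ℝ) - s)/2 with hlm
  have hprod : lp * lm = 1 := by
    rw [hlp, hlm]; nlinarith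
  have hsum2 : lp + lm = (ℓ:ℝ) := by rw [hlp, hlm]; ring
  have hlm1 : lm ≤ 1 := by
    have h : (ℓ:ℝ) - 2 ≤ s := by nlinarith [sq_nonneg (s - ((ℓ:ℝ) - 2)), sq_nonneg (s + ((ℓ:ℝ) - 2))]
    rw [hlm]; linarith
  have hlp1 : 1 ≤ lp := by linarith
  have hlppos : 0 < lp := by linarith
  have hlmpos : 0 < lm := by nlinarith
  set u : ℕ → ℝ := fun n => x (n+1) - lm * x n with hudef
  have hu : ∀ n, u n = lp^n * u 0 := by
    intro n
    induction n with
    | zero => simp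
    | succ k ih =>
      have h1 : u (k+1) = lp * u k := by
        have hll : (ℓ:ℝ) - lm = lp := by linarith
        show x (k+2) - lm * x (k+1) = lp * (x (k+1) - lm * x k)
        calc x (k+2) - lm * x (k+1) = ((ℓ:ℝ) - lm) * x (k+1) - x k := by rw [hrec k]; ring
          _ = lp * x (k+1) - (lp*lm) * x k := by rw [hll, hprod]; ring
          _ = lp * (x (k+1) - lm * x k) := by ring
      rw [h1, ih, pow_succ]; ring
  have hux : ∀ n, x (n+1) = lm * x n + u n := by
    intro n; show x (n+1) = lm * x n + (x (n+1) - lm * x n); ring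
  rcases lt_trichotomy (u 0) 0 with hu0 | hu0 | hu0
  · -- u 0 < 0 : x n ≤ x 0 + n * u 0, eventually negative
    have hb : ∀ n : ℕ, x n ≤ x 0 + n * u 0 := by
      intro n
      induction n with
      | zero => simp
      | succ k ih =>
        have h2 : lm * x k ≤ x k := by nlinarith [hx k]
        have hpow : (1:ℝ) ≤ lp^k := one_le_pow₀ hlp1
        have h3 : u k ≤ u 0 := by
          rw [hu k]; nlinarith
        have := hux k
        push_cast
        linarith
    obtain ⟨n, hn⟩ := exists_nat_gt (x 0 / (-(u 0)))
    have hlt : x 0 + n * u 0 < 0 := by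
      rw [div_lt_iff₀ (by linarith)] at hn
      linarith
    linarith [hx n, hb n]
  · -- u 0 = 0 : w is on the ray through Lm
    apply hw
    refine ⟨x 0, hx 0, ?_⟩
    have hx0 : x 0 = w.1 := by simp [hxdef]
    have hx1 : x 1 = lm * x 0 := by have := hux 0; rw [hu0] at this; linarith
    have hw2 : w.2 = x 1 - (ℓ:ℝ) * x 0 := by
      have h := hrec1 0
      simp only [Function.iterate_zero, id_eq] at h
      linarith
    have hw2' : w.2 = x 0 * ((-(ℓ:ℝ) - s) / 2) := by
      rw [hw2, hx1, hlm]; ring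
    rw [hLm]
    have : w = (w.1, w.2) := rfl
    rw [this, Prod.smul_mk, smul_eq_mul, smul_eq_mul]
    rw [← hx0, hw2']
    norm_num
  · -- u 0 > 0 : λ₊ⁿ u 0 would be bounded, contradiction
    have hxd : ∀ n, x n ≤ x 0 := by
      intro n
      induction n with
      | zero => exact le_refl _
      | succ k ih => linarith [hdec k]
    have hbnd : ∀ n, lp^n * u 0 < (1 - lm) * x 0 := by
      intro n
      have h1 : u n < (1 - lm) * x n := by
        have := hdec n
        show x (n+1) - lm * x n < (1 - lm) * x n
        linarith
      have h2 : (1 - lm) * x n ≤ (1 - lm) * x 0 := by nlinarith [hxd n]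
      rw [← hu n]
      linarith
    have h0 : u 0 < (1 - lm) * x 0 := by have := hbnd 0; simpa using this
    have hx0pos : 0 < x 0 := by nlinarith [hx 0]
    have hlmlt : lm < 1 := by nlinarith [hx 0]
    have hlpgt : 1 < lp := by nlinarith
    obtain ⟨n, hn⟩ := pow_unbounded_of_one_lt ((1-lm) * x 0 / u 0) hlpgt
    have : (1-lm) * x 0 < lp^n * u 0 := by
      rw [div_lt_iff₀ hu0] at hn
      linarith
    linarith [hbnd n]
end

section
/- Fix an integer ℓ > 2 and let F and L_± be as in the Kronecker setting. Then for every w ∈ ℝ² that is not a nonnegative multiple of L_−, the normalized iterates ‖F^n(w)‖^{−1}·F^n(w) converge to ‖L_+‖^{−1}·L_+ as n → ∞ (the attracting half of the North–South dynamics of the Kronecker mutation loop on the projectivized tropical X-variety). -/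
open Filter Topology

set_option maxHeartbeats 1600000

/-- North–South dynamics (attracting half) of the Kronecker mutation loop for `ℓ > 2`:
the normalized iterates of every point off the ray `ℝ≥0·L₋` converge to the unit vector
in the direction of `L₊` (Euclidean norm on `ℝ²`). -/
theorem stmt_17 (ℓ : ℤ) (hℓ : 2 < ℓ)
    (F : EuclideanSpace ℝ (Fin 2) → EuclideanSpace ℝ (Fin 2))
    (hF : ∀ w : EuclideanSpace ℝ (Fin 2),
      F w 0 = (ℓ : ℝ) * max (w 0) 0 + w 1 ∧ F w 1 = -(w 0))
    (Lp Lm : EuclideanSpace ℝ (Fin 2))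
    (hLp0 : Lp 0 = 1) (hLp1 : Lp 1 = (-(ℓ : ℝ) + Real.sqrt ((ℓ : ℝ) ^ 2 - 4)) / 2)
    (hLm0 : Lm 0 = 1) (hLm1 : Lm 1 = (-(ℓ : ℝ) - Real.sqrt ((ℓ : ℝ) ^ 2 - 4)) / 2) :
    ∀ w : EuclideanSpace ℝ (Fin 2), (¬ ∃ t : ℝ, 0 ≤ t ∧ w = t • Lm) →
      Tendsto (fun n : ℕ => ‖F^[n] w‖⁻¹ • F^[n] w) atTop (𝓝 (‖Lp‖⁻¹ • Lp)) := by
  intro w hw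
  have hℓR : (2:ℝ) < (ℓ:ℝ) := by exact_mod_cast hℓ
  obtain ⟨s, hs⟩ : ∃ x : ℝ, x = Real.sqrt ((ℓ:ℝ)^2 - 4) := ⟨_, rfl⟩
  rw [← hs] at hLp1 hLm1
  have h4 : (0:ℝ) ≤ (ℓ:ℝ)^2 - 4 := by nlinarith
  have hs2 : s^2 = (ℓ:ℝ)^2 - 4 := by rw [hs]; exact Real.sq_sqrt h4
  have hspos : 0 < s := by rw [hs]; exact Real.sqrt_pos.mpr (by nlinarith)
  obtain ⟨lp, hlp⟩ : ∃ x : ℝ, x = ((ℓ:ℝ) + s)/2 := ⟨_, rfl⟩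
  obtain ⟨lm, hlm⟩ : ∃ x : ℝ, x = ((ℓ:ℝ) - s)/2 := ⟨_, rfl⟩
  have hsl : s < (ℓ:ℝ) := by nlinarith
  have hlm_pos : 0 < lm := by rw [hlm]; linarith
  have hlm1 : lm < 1 := by rw [hlm]; nlinarith
  have hlp1 : 1 < lp := by rw [hlp]; linarith
  have hlp_pos : 0 < lp := by linarith
  have hprod : lp * lm = 1 := by rw [hlp, hlm]; nlinarith
  have hsum : lp + lm = (ℓ:ℝ) := by rw [hlp, hlm]; ring
  have hdiff : lp - lm = s := by rw [hlp, hlm]; ring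
  have hLp1' : Lp 1 = -lm := by rw [hLp1, hlm]; ring
  have hLm1' : Lm 1 = -lp := by rw [hLm1, hlp]; ring
  clear hs hlp hlm hLp1 hLm1
  have hdivs : ∀ x : ℝ, (lp - lm) * x / s = x := by
    intro x; rw [hdiff]; field_simp
  -- vector equality helper
  have hvec : ∀ (v : EuclideanSpace ℝ (Fin 2)) (c d : ℝ),
      v 0 = c + d → v 1 = c * (-lm) + d * (-lp) → v = c • Lp + d • Lm := by
    intro v c d h0 h1
    ext i
    fin_cases i
    · show v 0 = (c • Lp + d • Lm) 0
      rw [PiLp.add_apply, PiLp.smul_apply, PiLp.smul_apply, hLp0, hLm0,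
        smul_eq_mul, smul_eq_mul, mul_one, mul_one]
      exact h0
    · show v 1 = (c • Lp + d • Lm) 1
      rw [PiLp.add_apply, PiLp.smul_apply, PiLp.smul_apply, hLp1', hLm1',
        smul_eq_mul, smul_eq_mul]
      exact h1
  have hstep0 : ∀ v : EuclideanSpace ℝ (Fin 2), F v 0 = (ℓ:ℝ) * max (v 0) 0 + v 1 :=
    fun v => (hF v).1
  have hstep1 : ∀ v : EuclideanSpace ℝ (Fin 2), F v 1 = -(v 0) := fun v => (hF v).2
  have hr0 : (0:ℝ) ≤ lm/lp := le_of_lt (div_pos hlm_pos hlp_pos)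
  have hr1 : lm/lp < 1 := (div_lt_one hlp_pos).mpr (by linarith)
  have hrten : Tendsto (fun n : ℕ => (lm/lp)^n) atTop (𝓝 0) :=
    tendsto_pow_atTop_nhds_zero_of_lt_one hr0 hr1
  have hcanc : ∀ k : ℕ, (lm/lp)^k * lp^k = lm^k := by
    intro k
    rw [div_pow, div_mul_cancel₀ _ (pow_ne_zero k hlp_pos.ne')]
  -- Key: there is N with F^[N] w in the cone and positive Lp-coefficient
  have key : ∃ N : ℕ, 0 ≤ (F^[N] w) 0 ∧ 0 ≤ (F^[N] w) 0 + (F^[N] w) 1 ∧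
      0 < lp * (F^[N] w) 0 + (F^[N] w) 1 := by
    by_cases hall : ∀ k : ℕ, 0 ≤ (F^[k] w) 0
    · -- orbit stays in the linear region
      obtain ⟨a, ha⟩ : ∃ x : ℝ, x = (lp * w 0 + w 1) / s := ⟨_, rfl⟩
      obtain ⟨b, hb⟩ : ∃ x : ℝ, x = -((lm * w 0 + w 1) / s) := ⟨_, rfl⟩
      have hab0 : a + b = w 0 := by
        have h : a + b = (lp - lm) * w 0 / s := by rw [ha, hb]; ring
        rw [h, hdivs]
      have hab1 : a * (-lm) + b * (-lp) = w 1 := by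
        have h : a * (-lm) + b * (-lp) = (lp - lm) * w 1 / s := by rw [ha, hb]; ring
        rw [h, hdivs]
      have hlin : ∀ k : ℕ, (F^[k] w) 0 = a * lp^k + b * lm^k ∧
          (F^[k] w) 1 = a * lp^k * (-lm) + b * lm^k * (-lp) := by
        intro k
        induction k with
        | zero =>
          simp only [Function.iterate_zero_apply, pow_zero, mul_one]
          exact ⟨hab0.symm, hab1.symm⟩
        | succ k ih =>
          obtain ⟨ih0, ih1⟩ := ih
          rw [Function.iterate_succ_apply']
          constructor
          · rw [hstep0, max_eq_left (hall k), ih0, ih1]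
            linear_combination (-(a * lp^k + b * lm^k)) * hsum
          · rw [hstep1, ih0]
            linear_combination (a * lp^k + b * lm^k) * hprod
      rcases lt_trichotomy a 0 with haneg | hazero | hapos
      · exfalso
        have hT : Tendsto (fun k : ℕ => a + b * (lm/lp)^k) atTop (𝓝 a) := by
          have h := (hrten.const_mul b).const_add a
          simpa using h
        obtain ⟨k, hk⟩ := (hT.eventually_lt_const haneg).exists
        have hlpk : (0:ℝ) < lp^k := pow_pos hlp_pos k
        have heq : (F^[k] w) 0 = lp^k * (a + b * (lm/lp)^k) := by
          rw [(hlin k).1]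
          linear_combination (-b) * hcanc k
        have hneg : (F^[k] w) 0 < 0 := by
          rw [heq]; exact mul_neg_of_pos_of_neg hlpk hk
        exact absurd (hall k) (not_le.mpr hneg)
      · exfalso
        apply hw
        have hw0 : 0 ≤ w 0 := by simpa using hall 0
        have hzero : lp * w 0 + w 1 = 0 := by
          have h : (lp * w 0 + w 1) / s = 0 := ha ▸ hazero
          rcases div_eq_zero_iff.mp h with h' | h'
          · exact h'
          · exact absurd h' hspos.ne'
        refine ⟨w 0, hw0, ?_⟩
        ext i
        fin_cases i
        · show w 0 = (w 0 • Lm) 0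
          rw [PiLp.smul_apply, hLm0, smul_eq_mul, mul_one]
        · show w 1 = (w 0 • Lm) 1
          rw [PiLp.smul_apply, hLm1', smul_eq_mul]
          nlinarith [hzero]
      · -- a > 0 : find k where the sum coordinate becomes nonnegative
        have hT : Tendsto (fun k : ℕ => a * (1 - lm) + b * (1 - lp) * (lm/lp)^k)
            atTop (𝓝 (a * (1 - lm))) := by
          have h := (hrten.const_mul (b * (1 - lp))).const_add (a * (1 - lm))
          simpa using h
        have hpos : 0 < a * (1 - lm) := mul_pos hapos (by linarith)
        obtain ⟨k, hk⟩ := (hT.eventually_const_lt hpos).exists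
        have hlpk : (0:ℝ) < lp^k := pow_pos hlp_pos k
        refine ⟨k, hall k, ?_, ?_⟩
        · have heq : (F^[k] w) 0 + (F^[k] w) 1
              = lp^k * (a * (1 - lm) + b * (1 - lp) * (lm/lp)^k) := by
            rw [(hlin k).1, (hlin k).2]
            linear_combination (-(b * (1 - lp))) * hcanc k
          rw [heq]
          exact le_of_lt (mul_pos hlpk hk)
        · have heq : lp * (F^[k] w) 0 + (F^[k] w) 1 = a * lp^k * s := by
            rw [(hlin k).1, (hlin k).2]
            linear_combination (a * lp^k) * hdiff
          rw [heq]
          exact mul_pos (mul_pos hapos hlpk) hspos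
    · push_neg at hall
      obtain ⟨k, hk⟩ := hall
      by_cases hy : 0 ≤ (F^[k] w) 1
      · have e1 : F^[k+1] w = F (F^[k] w) := Function.iterate_succ_apply' F k w
        refine ⟨k + 1, ?_, ?_, ?_⟩ <;>
        · rw [e1]
          simp only [hstep0, hstep1, max_eq_right hk.le, mul_zero, zero_add]
          nlinarith [mul_nonneg hlp_pos.le hy, hk, hy]
      · push_neg at hy
        have e2 : F^[k+2] w = F (F (F^[k] w)) := by
          rw [show k+2 = k+1+1 from rfl, Function.iterate_succ_apply',
            Function.iterate_succ_apply']
        refine ⟨k + 2, ?_, ?_, ?_⟩ <;>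
        · rw [e2]
          simp only [hstep0, hstep1, max_eq_right hk.le, mul_zero, zero_add,
            max_eq_right hy.le]
          nlinarith [mul_pos hlp_pos (neg_pos.mpr hk), hk, hy]
  -- Now run the linear dynamics inside the invariant cone
  obtain ⟨N, hc0, hc1, hc2⟩ := key
  obtain ⟨v, hv⟩ : ∃ x : EuclideanSpace ℝ (Fin 2), x = F^[N] w := ⟨_, rfl⟩
  rw [← hv] at hc0 hc1 hc2
  obtain ⟨a, ha⟩ : ∃ x : ℝ, x = (lp * v 0 + v 1) / s := ⟨_, rfl⟩
  obtain ⟨b, hb⟩ : ∃ x : ℝ, x = -((lm * v 0 + v 1) / s) := ⟨_, rfl⟩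
  have hapos : 0 < a := ha ▸ div_pos hc2 hspos
  have hab0 : a + b = v 0 := by
    have h : a + b = (lp - lm) * v 0 / s := by rw [ha, hb]; ring
    rw [h, hdivs]
  have hab1 : a * (-lm) + b * (-lp) = v 1 := by
    have h : a * (-lm) + b * (-lp) = (lp - lm) * v 1 / s := by rw [ha, hb]; ring
    rw [h, hdivs]
  have hiter : ∀ n : ℕ, (0 ≤ (F^[n] v) 0 ∧ 0 ≤ (F^[n] v) 0 + (F^[n] v) 1) ∧
      F^[n] v = (a * lp^n) • Lp + (b * lm^n) • Lm := by
    intro n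
    induction n with
    | zero =>
      refine ⟨⟨hc0, hc1⟩, ?_⟩
      simp only [Function.iterate_zero_apply, pow_zero, mul_one]
      exact hvec v a b hab0.symm hab1.symm
    | succ n ih =>
      obtain ⟨⟨hx0, hx01⟩, heq⟩ := ih
      have hco0 : (F^[n] v) 0 = a * lp^n + b * lm^n := by
        rw [heq, PiLp.add_apply, PiLp.smul_apply, PiLp.smul_apply, hLp0, hLm0,
          smul_eq_mul, smul_eq_mul, mul_one, mul_one]
      have hco1 : (F^[n] v) 1 = a * lp^n * (-lm) + b * lm^n * (-lp) := by
        rw [heq, PiLp.add_apply, PiLp.smul_apply, PiLp.smul_apply, hLp1', hLm1',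
          smul_eq_mul, smul_eq_mul]
      have hnew0 : (F^[n+1] v) 0 = a * lp^(n+1) + b * lm^(n+1) := by
        rw [Function.iterate_succ_apply', hstep0, max_eq_left hx0, hco0, hco1]
        linear_combination (-(a * lp^n + b * lm^n)) * hsum
      have hnew1 : (F^[n+1] v) 1 = a * lp^(n+1) * (-lm) + b * lm^(n+1) * (-lp) := by
        rw [Function.iterate_succ_apply', hstep1, hco0]
        linear_combination (a * lp^n + b * lm^n) * hprod
      have hx0' : 0 ≤ (F^[n+1] v) 0 := by
        rw [Function.iterate_succ_apply', hstep0, max_eq_left hx0]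
        nlinarith [mul_nonneg (show (0:ℝ) ≤ (ℓ:ℝ) - 1 by linarith) hx0]
      have hx01' : 0 ≤ (F^[n+1] v) 0 + (F^[n+1] v) 1 := by
        rw [Function.iterate_succ_apply', hstep0, hstep1, max_eq_left hx0]
        nlinarith [mul_nonneg (show (0:ℝ) ≤ (ℓ:ℝ) - 2 by linarith) hx0]
      exact ⟨⟨hx0', hx01'⟩, hvec _ _ _ hnew0 hnew1⟩
  have hane : a ≠ 0 := ne_of_gt hapos
  have hlpn : ∀ n : ℕ, 0 < a * lp^n := fun n => mul_pos hapos (pow_pos hlp_pos n)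
  have hrel : ∀ n : ℕ, F^[n] v
      = (a * lp^n) • (Lp + ((b/a) * (lm/lp)^n) • Lm) := by
    intro n
    rw [(hiter n).2, smul_add, smul_smul]
    have hco : a * lp^n * ((b/a) * (lm/lp)^n) = b * lm^n := by
      field_simp
      rw [← hcanc n]; ring
    rw [hco]
  have hnorm : ∀ (c : ℝ) (x : EuclideanSpace ℝ (Fin 2)), 0 < c →
      ‖c • x‖⁻¹ • (c • x) = ‖x‖⁻¹ • x := by
    intro c x hc
    rw [norm_smul, smul_smul, Real.norm_eq_abs, abs_of_pos hc, mul_inv]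
    congr 1
    rw [mul_comm c⁻¹, mul_assoc, inv_mul_cancel₀ (ne_of_gt hc), mul_one]
  have hLpne : Lp ≠ 0 := by
    intro h
    rw [h] at hLp0
    simpa using hLp0
  have hu : Tendsto (fun n : ℕ => Lp + ((b/a) * (lm/lp)^n) • Lm) atTop (𝓝 Lp) := by
    have h1 : Tendsto (fun n : ℕ => (b/a) * (lm/lp)^n) atTop (𝓝 0) := by
      simpa using hrten.const_mul (b/a)
    have h2 := h1.smul_const Lm
    have h3 := (tendsto_const_nhds (x := Lp) (f := atTop (α := ℕ))).add h2
    simpa using h3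
  have htend : Tendsto (fun n : ℕ =>
      ‖Lp + ((b/a) * (lm/lp)^n) • Lm‖⁻¹ • (Lp + ((b/a) * (lm/lp)^n) • Lm))
      atTop (𝓝 (‖Lp‖⁻¹ • Lp)) :=
    (hu.norm.inv₀ (norm_ne_zero_iff.mpr hLpne)).smul hu
  refine (tendsto_add_atTop_iff_nat N).mp (htend.congr fun n => ?_)
  show _ = ‖F^[n+N] w‖⁻¹ • F^[n+N] w
  have hshift : F^[n+N] w = F^[n] v := by
    rw [Function.iterate_add_apply, ← hv]
  rw [hshift, hrel n, hnorm _ _ (hlpn n)]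
end
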